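/- Let κ be a Feller kernel on a metric space Ω dominated by a finite measure ν (κ(ω,x) ≤ ν(ω) for all ω,x). Then for every g ∈ L¹(Ω,ν), Kg is a bounded continuous function; in particular κ is a strong Feller kernel. -/

import Mathlib

open MeasureTheory
open scoped ENNReal BoundedContinuousFunction

/-- A Feller kernel κ dominated by a finite measure ν (κ(ω,x) ≤ ν(ω)) maps every
g ∈ L¹(Ω,ν) to a bounded continuous function Kg; in particular κ is a strong Feller
kernel. -/
theorem stmt15 {Ω : Type*} [MetricSpace Ω] [MeasurableSpace Ω] [BorelSpace Ω]
    (κ : Ω → Measure Ω) [∀ x, IsFiniteMeasure (κ x)]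
    (ν : Measure Ω) [IsFiniteMeasure ν]
    (hdom : ∀ s : Set Ω, MeasurableSet s → ∀ x, κ x s ≤ ν s)
    (hFeller : ∀ g : Ω → ℝ, Continuous g → (∃ C, ∀ x, |g x| ≤ C) →
      Continuous (fun x => ∫ ξ, g ξ ∂ κ x)) :
    (∀ g : Ω → ℝ, Integrable g ν →
      Continuous (fun x => ∫ ξ, g ξ ∂ κ x) ∧ ∃ C, ∀ x, |∫ ξ, g ξ ∂ κ x| ≤ C) ∧
    (∀ s : Set Ω, MeasurableSet s → Continuous (fun x => (κ x s).toReal)) := by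
  have hle : ∀ x, κ x ≤ ν := fun x => Measure.le_iff.2 fun s hs => hdom s hs x
  have key : ∀ g : Ω → ℝ, Integrable g ν →
      Continuous (fun x => ∫ ξ, g ξ ∂ κ x) ∧ ∃ C, ∀ x, |∫ ξ, g ξ ∂ κ x| ≤ C := by
    intro g hg
    have hgκ : ∀ x, Integrable g (κ x) := fun x => hg.mono_measure (hle x)
    have hbound : ∀ (f : Ω → ℝ), Integrable f ν → ∀ x,
        |∫ ξ, f ξ ∂ κ x| ≤ ∫ ξ, ‖f ξ‖ ∂ ν := by
      intro f hf x
      calc |∫ ξ, f ξ ∂ κ x| ≤ ∫ ξ, ‖f ξ‖ ∂ κ x := by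
            simpa using norm_integral_le_integral_norm (μ := κ x) f
        _ ≤ ∫ ξ, ‖f ξ‖ ∂ ν :=
            integral_mono_measure (hle x) (Filter.Eventually.of_forall fun ξ => norm_nonneg _)
              hf.norm
    constructor
    · -- continuity via approximation by bounded continuous functions
      have happrox : ∀ n : ℕ, ∃ h : Ω →ᵇ ℝ,
          (∫ ξ, ‖g ξ - h ξ‖ ∂ ν) ≤ 1 / (n + 1) ∧ Integrable h ν := fun n =>
        hg.exists_boundedContinuous_integral_sub_le (by positivity)
      choose h hh hhint using happrox
      have hcont : ∀ n, Continuous (fun x => ∫ ξ, (h n) ξ ∂ κ x) := fun n =>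
        hFeller (h n) (h n).continuous ⟨‖h n‖, fun x => by
          simpa [Real.norm_eq_abs] using (h n).norm_coe_le_norm x⟩
      have htu : TendstoUniformly (fun n x => ∫ ξ, (h n) ξ ∂ κ x)
          (fun x => ∫ ξ, g ξ ∂ κ x) Filter.atTop := by
        rw [Metric.tendstoUniformly_iff]
        intro ε hε
        obtain ⟨N, hN⟩ := exists_nat_one_div_lt hε
        filter_upwards [Filter.eventually_ge_atTop N] with n hn x
        have h1 : |∫ ξ, g ξ ∂ κ x - ∫ ξ, (h n) ξ ∂ κ x| ≤ 1 / (n + 1) := by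
          rw [← integral_sub (hgκ x) ((hhint n).mono_measure (hle x))]
          exact (hbound _ (hg.sub (hhint n)) x).trans (hh n)
        have h2 : (1 : ℝ) / (n + 1) ≤ 1 / (N + 1) := by
          apply div_le_div_of_nonneg_left one_pos.le (by positivity)
          exact_mod_cast by omega
        calc dist (∫ ξ, g ξ ∂ κ x) (∫ ξ, (h n) ξ ∂ κ x)
            ≤ 1 / (n + 1) := by simpa [Real.dist_eq] using h1
          _ ≤ 1 / (N + 1) := h2
          _ < ε := hN
      exact htu.continuous (Filter.Eventually.of_forall hcont).frequently
    · exact ⟨∫ ξ, ‖g ξ‖ ∂ ν, hbound g hg⟩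
  refine ⟨key, fun s hs => ?_⟩
  have hint : Integrable (s.indicator (fun _ => (1 : ℝ))) ν :=
    (integrable_const 1).indicator hs
  have := (key _ hint).1
  have heq : (fun x => ∫ ξ, s.indicator (fun _ => (1 : ℝ)) ξ ∂ κ x)
      = fun x => ((κ x) s).toReal := by
    funext x
    have h0 := integral_indicator_one (μ := κ x) hs
    rw [measureReal_def] at h0
    exact h0
  rwa [heq] at this
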